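/- A priori uniform and lower bounds for the transported defining function: assume the patch flow setup on [0,T], and let Φ : ℝ^d × [0,T] → ℝ be continuous such that for each t the function Φ(·,t) is a defining function for D_t of class C^{1+γ}. Let G : ℝ^d × [0,T] → ℝ^{d×d} be a matrix field and g : [0,T] → [0,∞) an integrable function with operator norm ‖G(x,t)‖ ≤ g(t) for all x, and suppose that for every α ∈ ℝ^d and t ∈ [0,T] the map t ↦ ∇Φ(X(α,t),t) is differentiable with derivative -G(X(α,t),t)ᵀ ∇Φ(X(α,t),t) - χ_{D_t}(X(α,t)) ∇Φ(X(α,t),t) (in the application G = ∇v and g(t) = ‖∇v(·,t)‖_∞). Then for every t ∈ [0,T]: (i) ‖∇Φ(·,t)‖_∞ ≤ ‖∇Φ(·,0)‖_∞ · exp(∫_0^t (1 + g(s)) ds); and (ii) inf_{x∈∂D_t} |∇Φ(x,t)| ≥ inf_{x∈∂D_0} |∇Φ(x,0)| · exp(-∫_0^t (1 + g(s)) ds). -/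

import Mathlib

open MeasureTheory Metric Set Filter
open scoped Topology RealInnerProductSpace

section Gronwall

variable {E : Type*} [NormedAddCommGroup E] [NormedSpace ℝ E]

/-- Fencing lemma where the boundary function only has a liminf slope bound from below. -/
theorem mygron_fence {f f' B : ℝ → ℝ} {a b : ℝ}
    (hf : ContinuousOn f (Icc a b))
    (hf' : ∀ x ∈ Ico a b, ∀ r, f' x < r → ∃ᶠ z in 𝓝[>] x, slope f x z < r)
    (ha : f a ≤ B a) (hB : ContinuousOn B (Icc a b))
    (bound : ∀ x ∈ Ico a b, f x = B x →
      ∃ r, f' x < r ∧ ∀ᶠ z in 𝓝[>] x, r < slope B x z) :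
    ∀ ⦃x⦄, x ∈ Icc a b → f x ≤ B x := by
  change Icc a b ⊆ { x | f x ≤ B x }
  set s := { x | f x ≤ B x } ∩ Icc a b
  have A : ContinuousOn (fun x => (f x, B x)) (Icc a b) := hf.prodMk hB
  have : IsClosed s := by
    simp only [s, inter_comm]
    exact A.preimage_isClosed_of_isClosed isClosed_Icc OrderClosedTopology.isClosed_le'
  apply this.Icc_subset_of_forall_exists_gt ha
  rintro x ⟨hxB : f x ≤ B x, xab⟩ y hy
  cases' hxB.lt_or_eq with hxB hxB
  · refine nonempty_of_mem (inter_mem ?_ (Ioc_mem_nhdsGT_of_mem ⟨le_rfl, hy⟩))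
    have : ∀ᶠ x in 𝓝[Icc a b] x, f x < B x :=
      A x (Ico_subset_Icc_self xab) (IsOpen.mem_nhds (isOpen_lt continuous_fst continuous_snd) hxB)
    have : ∀ᶠ x in 𝓝[>] x, f x < B x := nhdsWithin_le_of_mem (Icc_mem_nhdsGT_of_mem xab) this
    exact this.mono fun y => le_of_lt
  · obtain ⟨r, hfr, HB⟩ := bound x xab hxB
    specialize hf' x xab r hfr
    obtain ⟨z, hfz, hzB, hz⟩ : ∃ z, slope f x z < r ∧ r < slope B x z ∧ z ∈ Ioc x y :=
      (hf'.and_eventually (HB.and (Ioc_mem_nhdsGT_of_mem ⟨le_rfl, hy⟩))).exists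
    refine ⟨z, ?_, hz⟩
    have := (hfz.trans hzB).le
    rwa [slope_def_field, slope_def_field, div_le_div_iff_of_pos_right (sub_pos.2 hz.1), hxB,
      sub_le_sub_iff_right] at this

/-- Grönwall with a lower semicontinuous (EReal-valued) dominating coefficient. -/
theorem mygron_lsc {f f' : ℝ → E} {c ψ : ℝ → ℝ} {φ : ℝ → EReal} {a b δ : ℝ}
    (hab : a ≤ b)
    (hf : ContinuousOn f (Icc a b))
    (hf' : ∀ x ∈ Ico a b, HasDerivWithinAt f (f' x) (Ici x) x)
    (hc : ∀ x ∈ Ico a b, ‖f' x‖ ≤ c x * ‖f x‖)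
    (hφ : LowerSemicontinuous φ) (hcφ : ∀ x, (c x : EReal) < φ x)
    (hψφ : ∀ᵐ x ∂(volume.restrict (Icc a b)), (ψ x : EReal) = φ x)
    (hψ : IntervalIntegrable ψ volume a b)
    (hδ : 0 < δ) (hfa : ‖f a‖ ≤ δ) :
    ‖f b‖ ≤ δ * Real.exp (∫ s in a..b, ψ s) := by
  set u : ℝ → ℝ := fun x => ∫ s in a..x, ψ s with hu
  set B : ℝ → ℝ := fun x => δ * Real.exp (u x) with hBdef
  have hBpos : ∀ x, 0 < B x := fun x => mul_pos hδ (Real.exp_pos _)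
  have hBcont : ContinuousOn B (Icc a b) := by
    have h1 : ContinuousOn u (Icc a b) := by
      have := intervalIntegral.continuousOn_primitive_interval'
        (μ := volume) (f := ψ) (b₁ := a) (b₂ := b) hψ Set.left_mem_uIcc
      rwa [Set.uIcc_of_le hab] at this
    exact (continuousOn_const.mul (Real.continuous_exp.comp_continuousOn h1))
  have main : ∀ ⦃x⦄, x ∈ Icc a b → ‖f x‖ ≤ B x := by
    apply mygron_fence (f' := fun x => ‖f' x‖)
    · exact continuous_norm.comp_continuousOn hf
    · intro x hx r hr
      exact (hf' x hx).liminf_right_slope_norm_le hr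
    · simpa [hBdef, hu] using hfa
    · exact hBcont
    · intro x hx hfB
      have hfxpos : 0 < ‖f x‖ := by rw [hfB]; exact hBpos x
      obtain ⟨q, hq1, hq2⟩ := EReal.exists_between_coe_real (hcφ x)
      have hq1' : c x < q := by exact_mod_cast hq1
      have hr1 : ‖f' x‖ < q * ‖f x‖ :=
        lt_of_le_of_lt (hc x hx) (mul_lt_mul_of_pos_right hq1' hfxpos)
      obtain ⟨r, hr2, hr3⟩ := exists_between hr1
      refine ⟨r, hr2, ?_⟩
      -- φ > q near x
      have hev : ∀ᶠ y in 𝓝 x, (q : EReal) < φ y := hφ x _ hq2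
      obtain ⟨η, hη, hball⟩ := Metric.eventually_nhds_iff.1 hev
      have hmem : Ioc x (min b (x + η / 2)) ∈ 𝓝[>] x := by
        refine Ioc_mem_nhdsGT_of_mem ⟨le_rfl, lt_min hx.2 ?_⟩
        linarith
      filter_upwards [hmem] with z hz
      have hxz : x < z := hz.1
      have hzb : z ≤ b := hz.2.trans (min_le_left _ _)
      have hzη : z ≤ x + η / 2 := hz.2.trans (min_le_right _ _)
      -- ∫ x..z ψ ≥ q (z - x)
      have hsub : Icc x z ⊆ Icc a b := Icc_subset_Icc hx.1 hzb
      have hψxz : IntervalIntegrable ψ volume x z :=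
        hψ.mono_set (by rw [Set.uIcc_of_le hab, Set.uIcc_of_le hxz.le]; exact hsub)
      have haez : ∀ᵐ y ∂(volume.restrict (Icc x z)), (ψ y : EReal) = φ y :=
        ae_restrict_of_ae_restrict_of_subset hsub hψφ
      have hqψ : (fun _ => q) ≤ᵐ[volume.restrict (Icc x z)] ψ := by
        filter_upwards [haez, ae_restrict_mem measurableSet_Icc] with y h1 h2
        have hyx : dist y x < η := by
          rw [Real.dist_eq, abs_lt]
          constructor <;> [linarith [h2.1]; linarith [h2.2]]
        have := hball hyx
        rw [← h1] at this
        exact_mod_cast this.le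
      have hint : q * (z - x) ≤ ∫ s in x..z, ψ s := by
        have := intervalIntegral.integral_mono_ae_restrict hxz.le
          (intervalIntegrable_const (c := q)) hψxz hqψ
        simpa [mul_comm] using this
      have hI1 : IntervalIntegrable ψ volume a z := by
        apply hψ.mono_set
        rw [Set.uIcc_of_le hab, Set.uIcc_of_le (hx.1.trans hxz.le)]
        exact Icc_subset_Icc le_rfl hzb
      have hI2 : IntervalIntegrable ψ volume a x := by
        apply hψ.mono_set
        rw [Set.uIcc_of_le hab, Set.uIcc_of_le hx.1]
        exact Icc_subset_Icc le_rfl hx.2.le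
      have huz : u z - u x = ∫ s in x..z, ψ s :=
        intervalIntegral.integral_interval_sub_left hI1 hI2
      -- slope bound
      have hexp : u z - u x ≤ Real.exp (u z - u x) - 1 := by
        linarith [Real.add_one_le_exp (u z - u x)]
      have hexpmul : Real.exp (u z) = Real.exp (u x) * Real.exp (u z - u x) := by
        rw [← Real.exp_add]; ring_nf
      have hBz : B z - B x = B x * (Real.exp (u z - u x) - 1) := by
        simp only [hBdef]
        rw [hexpmul]; ring
      have hzx : (0:ℝ) < z - x := sub_pos.2 hxz
      have h1 : q * (z - x) ≤ Real.exp (u z - u x) - 1 :=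
        le_trans (by rw [huz]; exact hint) hexp
      have hslope : r < slope B x z := by
        rw [slope_def_field, hBz, lt_div_iff₀ hzx]
        have h3 : r * (z - x) < q * B x * (z - x) := by
          apply mul_lt_mul_of_pos_right _ hzx
          rwa [hfB] at hr3
        calc r * (z - x) < q * B x * (z - x) := h3
          _ = B x * (q * (z - x)) := by ring
          _ ≤ B x * (Real.exp (u z - u x) - 1) :=
              mul_le_mul_of_nonneg_left h1 (hBpos x).le
      exact hslope
  have := main (right_mem_Icc.2 hab)
  simpa [hBdef, hu] using this

/-- Grönwall's inequality with an integrable coefficient: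
if `‖f'(x)‖ ≤ c x * ‖f x‖` on `[a, b]` with `c` interval integrable, then
`‖f b‖ ≤ ‖f a‖ * exp (∫ c)`. -/
theorem mygron {f f' : ℝ → E} {c : ℝ → ℝ} {a b : ℝ} (hab : a ≤ b)
    (hf : ContinuousOn f (Icc a b))
    (hf' : ∀ x ∈ Ico a b, HasDerivWithinAt f (f' x) (Ici x) x)
    (hc : ∀ x ∈ Ico a b, ‖f' x‖ ≤ c x * ‖f x‖)
    (hcint : IntervalIntegrable c volume a b) :
    ‖f b‖ ≤ ‖f a‖ * Real.exp (∫ s in a..b, c s) := by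
  have key : ∀ ε : ℝ, 0 < ε →
      ‖f b‖ ≤ (‖f a‖ + ε) * Real.exp ((∫ s in a..b, c s) + ε) := by
    intro ε hε
    have hμ : Integrable c (volume.restrict (Icc a b)) := by
      rw [← IntegrableOn, integrableOn_Icc_iff_integrableOn_Ioc]
      exact (intervalIntegrable_iff_integrableOn_Ioc_of_le hab).1 hcint
    obtain ⟨φ, hcφ, hφlsc, hφint, hφtop, hφlt⟩ :=
      exists_lt_lowerSemicontinuous_integral_lt (μ := volume.restrict (Icc a b)) c hμ hε
    set ψ : ℝ → ℝ := fun x => (φ x).toReal with hψdef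
    have hψφ : ∀ᵐ x ∂(volume.restrict (Icc a b)), (ψ x : EReal) = φ x := by
      filter_upwards [hφtop] with x hx
      exact EReal.coe_toReal hx.ne_top (((EReal.bot_lt_coe _).trans (hcφ x)).ne')
    have hψint : IntervalIntegrable ψ volume a b := by
      rw [intervalIntegrable_iff_integrableOn_Ioc_of_le hab]
      exact (MeasureTheory.IntegrableOn.mono_set hφint Ioc_subset_Icc_self)
    have hψval : (∫ s in a..b, ψ s) < (∫ s in a..b, c s) + ε := by
      rw [intervalIntegral.integral_of_le hab, ← integral_Icc_eq_integral_Ioc]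
      calc (∫ s in Icc a b, ψ s) < (∫ x, c x ∂(volume.restrict (Icc a b))) + ε := hφlt
        _ = (∫ s in a..b, c s) + ε := by
            rw [intervalIntegral.integral_of_le hab, ← integral_Icc_eq_integral_Ioc]
    have hmain := mygron_lsc hab hf hf' hc hφlsc hcφ hψφ hψint
      (lt_of_le_of_lt (norm_nonneg (f a)) (lt_add_of_pos_right _ hε))
      (le_of_lt (lt_add_of_pos_right _ hε))
    refine hmain.trans ?_
    exact mul_le_mul_of_nonneg_left (Real.exp_le_exp.2 hψval.le)
      (by positivity)
  have H : Filter.Tendsto (fun ε : ℝ => (‖f a‖ + ε) * Real.exp ((∫ s in a..b, c s) + ε))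
      (𝓝[>] 0) (𝓝 (‖f a‖ * Real.exp (∫ s in a..b, c s))) := by
    have hcont : Continuous fun ε : ℝ => (‖f a‖ + ε) * Real.exp ((∫ s in a..b, c s) + ε) := by
      continuity
    have := (hcont.tendsto 0).mono_left (nhdsWithin_le_nhds (s := Ioi (0:ℝ)))
    simpa using this
  refine ge_of_tendsto H ?_
  filter_upwards [self_mem_nhdsWithin] with ε hε
  exact key ε hε

end Gronwall

noncomputable def sphereVol (d : ℕ) : ℝ :=
  d * (volume (Metric.ball (0 : EuclideanSpace ℝ (Fin d)) 1)).toReal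

noncomputable def gradN (d : ℕ) (y : EuclideanSpace ℝ (Fin d)) : EuclideanSpace ℝ (Fin d) :=
  (sphereVol d * ‖y‖ ^ d)⁻¹ • y

noncomputable def hessN (d : ℕ) (z w : EuclideanSpace ℝ (Fin d)) : EuclideanSpace ℝ (Fin d) :=
  (sphereVol d)⁻¹ • ((‖z‖ ^ d)⁻¹ • w - ((d : ℝ) * (‖z‖ ^ (d + 2))⁻¹ * ⟪z, w⟫) • z)

/-- `Φ` is a defining function of class `C^{1+γ}` for the set `D`. -/
def IsDefining (d : ℕ) (γ : ℝ) (D : Set (EuclideanSpace ℝ (Fin d)))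
    (Φ : EuclideanSpace ℝ (Fin d) → ℝ) : Prop :=
  ContDiff ℝ 1 Φ ∧
  (∃ K : ℝ, ∀ x y, ‖gradient Φ x - gradient Φ y‖ ≤ K * ‖x - y‖ ^ γ) ∧
  D = {x | Φ x < 0} ∧
  frontier D = {x | Φ x = 0} ∧
  ∀ x ∈ frontier D, gradient Φ x ≠ 0

/-- `D` is a bounded domain of class `C^{1+γ}`. -/
def IsC1Domain (d : ℕ) (γ : ℝ) (D : Set (EuclideanSpace ℝ (Fin d))) : Prop :=
  IsOpen D ∧ Bornology.IsBounded D ∧ ∃ Φ, IsDefining d γ D Φ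

/-- A priori uniform and lower bounds for the gradient of the transported defining
function (Theorem 7.1, estimates (7.2) and (7.3)). -/
theorem apriori_uniform_and_lower_bounds
    (d : ℕ) (hd : 2 ≤ d) (γ : ℝ) (hγ : γ ∈ Set.Ioo (0:ℝ) 1)
    (T : ℝ) (hT : 0 < T)
    (D₀ : Set (EuclideanSpace ℝ (Fin d))) (hD₀ : IsC1Domain d γ D₀)
    (X : EuclideanSpace ℝ (Fin d) → ℝ → EuclideanSpace ℝ (Fin d))
    (hXcont : Continuous fun p : EuclideanSpace ℝ (Fin d) × ℝ => X p.1 p.2)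
    (hX0 : ∀ α, X α 0 = α)
    (hXhomeo : ∀ t ∈ Set.Icc (0:ℝ) T,
      ∃ h : EuclideanSpace ℝ (Fin d) ≃ₜ EuclideanSpace ℝ (Fin d), ∀ α, h α = X α t)
    (hDt : ∀ t ∈ Set.Icc (0:ℝ) T, IsC1Domain d γ ((fun α => X α t) '' D₀))
    (hbd : ∀ t ∈ Set.Icc (0:ℝ) T,
      frontier ((fun α => X α t) '' D₀) = (fun α => X α t) '' frontier D₀)
    (v : EuclideanSpace ℝ (Fin d) → ℝ → EuclideanSpace ℝ (Fin d))
    (hv : ∀ x t, v x t = -(∫ y in (fun α => X α t) '' D₀, gradN d (x - y)))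
    (hflow : ∀ α, ∀ t ∈ Set.Icc (0:ℝ) T, HasDerivAt (fun s => X α s) (v (X α t) t) t)
    (Φ : EuclideanSpace ℝ (Fin d) → ℝ → ℝ)
    (hΦcont : Continuous fun p : EuclideanSpace ℝ (Fin d) × ℝ => Φ p.1 p.2)
    (hΦdef : ∀ t ∈ Set.Icc (0:ℝ) T,
      IsDefining d γ ((fun α => X α t) '' D₀) (fun z => Φ z t))
    (G : EuclideanSpace ℝ (Fin d) → ℝ →
      EuclideanSpace ℝ (Fin d) →L[ℝ] EuclideanSpace ℝ (Fin d))
    (g : ℝ → ℝ) (hg0 : ∀ t, 0 ≤ g t) (hgint : IntervalIntegrable g volume 0 T)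
    (hGg : ∀ x : EuclideanSpace ℝ (Fin d), ∀ t ∈ Set.Icc (0:ℝ) T, ‖G x t‖ ≤ g t)
    (hode : ∀ α : EuclideanSpace ℝ (Fin d), ∀ t ∈ Set.Icc (0:ℝ) T,
      HasDerivAt (fun s => gradient (fun z => Φ z s) (X α s))
        (-(ContinuousLinearMap.adjoint (G (X α t) t)
              (gradient (fun z => Φ z t) (X α t)))
          - Set.indicator ((fun α => X α t) '' D₀) (fun _ => (1:ℝ)) (X α t)
              • gradient (fun z => Φ z t) (X α t)) t) :
    (∀ C₀ : ℝ, (∀ x, ‖gradient (fun z => Φ z 0) x‖ ≤ C₀) →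
      ∀ t ∈ Set.Icc (0:ℝ) T, ∀ x,
        ‖gradient (fun z => Φ z t) x‖
          ≤ C₀ * Real.exp (∫ s in (0:ℝ)..t, (1 + g s))) ∧
    (∀ m : ℝ, (∀ x ∈ frontier D₀, m ≤ ‖gradient (fun z => Φ z 0) x‖) →
      ∀ t ∈ Set.Icc (0:ℝ) T, ∀ x ∈ frontier ((fun α => X α t) '' D₀),
        m * Real.exp (-∫ s in (0:ℝ)..t, (1 + g s))
          ≤ ‖gradient (fun z => Φ z t) x‖) := by
  classical
  -- notation
  set F : EuclideanSpace ℝ (Fin d) → ℝ → EuclideanSpace ℝ (Fin d) :=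
    fun α s => gradient (fun z => Φ z s) (X α s) with hF
  set D : EuclideanSpace ℝ (Fin d) → ℝ → EuclideanSpace ℝ (Fin d) :=
    fun α s => -(ContinuousLinearMap.adjoint (G (X α s) s)
        (gradient (fun z => Φ z s) (X α s)))
      - Set.indicator ((fun α => X α s) '' D₀) (fun _ => (1:ℝ)) (X α s)
          • gradient (fun z => Φ z s) (X α s) with hD
  have hode' : ∀ α, ∀ s ∈ Set.Icc (0:ℝ) T, HasDerivAt (fun σ => F α σ) (D α s) s :=
    fun α s hs => hode α s hs
  have hDnorm : ∀ α, ∀ s ∈ Set.Icc (0:ℝ) T, ‖D α s‖ ≤ (1 + g s) * ‖F α s‖ := by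
    intro α s hs
    have h1 : ‖ContinuousLinearMap.adjoint (G (X α s) s) (F α s)‖ ≤ g s * ‖F α s‖ := by
      refine le_trans (ContinuousLinearMap.le_opNorm _ _) ?_
      have : ‖ContinuousLinearMap.adjoint (G (X α s) s)‖ = ‖G (X α s) s‖ :=
        LinearIsometryEquiv.norm_map _ _
      rw [this]
      exact mul_le_mul_of_nonneg_right (hGg _ s hs) (norm_nonneg _)
    have h2 : ‖Set.indicator ((fun α => X α s) '' D₀) (fun _ => (1:ℝ)) (X α s)
        • F α s‖ ≤ 1 * ‖F α s‖ := by
      rw [norm_smul]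
      apply mul_le_mul_of_nonneg_right _ (norm_nonneg _)
      rw [Real.norm_eq_abs]
      rcases Set.indicator_eq_zero_or_self ((fun α => X α s) '' D₀)
        (fun _ => (1:ℝ)) (X α s) with h | h <;> rw [h] <;> norm_num
    calc ‖D α s‖ ≤ ‖ContinuousLinearMap.adjoint (G (X α s) s) (F α s)‖
        + ‖Set.indicator ((fun α => X α s) '' D₀) (fun _ => (1:ℝ)) (X α s) • F α s‖ := by
          rw [hD]; exact (norm_sub_le _ _).trans (by rw [norm_neg])
      _ ≤ g s * ‖F α s‖ + 1 * ‖F α s‖ := add_le_add h1 h2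
      _ = (1 + g s) * ‖F α s‖ := by ring
  have hgt : ∀ t ∈ Set.Icc (0:ℝ) T, IntervalIntegrable g volume 0 t := by
    intro t ht
    apply hgint.mono_set
    rw [Set.uIcc_of_le ht.1, Set.uIcc_of_le (le_of_lt hT)]
    exact Set.Icc_subset_Icc le_rfl ht.2
  -- forward Gronwall estimate
  have fwd : ∀ α, ∀ t ∈ Set.Icc (0:ℝ) T,
      ‖F α t‖ ≤ ‖F α 0‖ * Real.exp (∫ s in (0:ℝ)..t, (1 + g s)) := by
    intro α t ht
    have hsub : Set.Icc (0:ℝ) t ⊆ Set.Icc (0:ℝ) T := Set.Icc_subset_Icc le_rfl ht.2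
    refine mygron (f' := fun s => D α s) ht.1 ?_ ?_ ?_ ?_
    · exact fun s hs => ((hode' α s (hsub hs)).continuousAt).continuousWithinAt
    · exact fun s hs => (hode' α s (hsub (Set.Ico_subset_Icc_self hs))).hasDerivWithinAt
    · exact fun s hs => hDnorm α s (hsub (Set.Ico_subset_Icc_self hs))
    · exact intervalIntegrable_const.add (hgt t ht)
  -- backward Gronwall estimate
  have bwd : ∀ α, ∀ t ∈ Set.Icc (0:ℝ) T,
      ‖F α 0‖ ≤ ‖F α t‖ * Real.exp (∫ s in (0:ℝ)..t, (1 + g s)) := by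
    intro α t ht
    have hsub : Set.Icc (0:ℝ) t ⊆ Set.Icc (0:ℝ) T := Set.Icc_subset_Icc le_rfl ht.2
    have hder : ∀ s ∈ Set.Icc (0:ℝ) t,
        HasDerivAt (fun σ => F α (t - σ)) ((-1 : ℝ) • D α (t - s)) s := by
      intro s hs
      have hts : t - s ∈ Set.Icc (0:ℝ) T :=
        ⟨by linarith [hs.2], by linarith [hs.1, ht.2]⟩
      have := HasDerivAt.scomp (𝕜 := ℝ) s (hode' α (t - s) hts)
        ((hasDerivAt_id s).const_sub t)
      simpa [Function.comp_def] using this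
    have key : ‖F α (t - t)‖
        ≤ ‖F α (t - 0)‖ * Real.exp (∫ s in (0:ℝ)..t, (1 + g (t - s))) := by
      refine mygron (f := fun σ => F α (t - σ)) (f' := fun σ => (-1 : ℝ) • D α (t - σ))
        (c := fun σ => 1 + g (t - σ)) ht.1 ?_ ?_ ?_ ?_
      · exact fun s hs => ((hder s hs).continuousAt).continuousWithinAt
      · exact fun s hs => (hder s (Set.Ico_subset_Icc_self hs)).hasDerivWithinAt
      · intro s hs
        have hts : t - s ∈ Set.Icc (0:ℝ) T :=
          ⟨by linarith [hs.2, (Set.Ico_subset_Icc_self hs).2],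
           by linarith [hs.1, ht.2]⟩
        simpa [norm_smul] using hDnorm α (t - s) hts
      · have := (intervalIntegrable_const (c := (1:ℝ))).add (hgt t ht)
        have h2 := (this.symm).comp_sub_left t
        simpa using h2
    have hI : (∫ s in (0:ℝ)..t, (1 + g (t - s)))
        = ∫ s in (0:ℝ)..t, (1 + g s) := by
      have := intervalIntegral.integral_comp_sub_left (fun s => 1 + g s) t
        (a := (0:ℝ)) (b := t)
      simpa using this
    rw [hI] at key
    simpa using key
  have hIexp : ∀ t, (0:ℝ) < Real.exp (∫ s in (0:ℝ)..t, (1 + g s)) :=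
    fun t => Real.exp_pos _
  constructor
  · -- upper bound
    intro C₀ hC₀ t ht x
    obtain ⟨h, hh⟩ := hXhomeo t ht
    set α := h.symm x with hα
    have hXαt : X α t = x := by rw [← hh]; exact h.apply_symm_apply x
    have h0 : F α 0 = gradient (fun z => Φ z 0) α := by
      simp only [hF, hX0]
    have hnorm0 : ‖F α 0‖ ≤ C₀ := by rw [h0]; exact hC₀ α
    have := fwd α t ht
    rw [hF] at this
    simp only at this
    rw [hXαt] at this
    refine this.trans ?_
    have h0' : ‖F α 0‖ ≤ C₀ := hnorm0
    exact mul_le_mul_of_nonneg_right (by simpa [hF, hX0] using h0')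
      (Real.exp_nonneg _)
  · -- lower bound
    intro m hm t ht x hxf
    rw [hbd t ht] at hxf
    obtain ⟨α, hα, hXα⟩ := hxf
    have hm0 : m ≤ ‖F α 0‖ := by
      simp only [hF, hX0]
      exact hm α hα
    have hb := bwd α t ht
    have hFt : F α t = gradient (fun z => Φ z t) x := by
      simp only [hF]; rw [show X α t = x from hXα]
    have : m ≤ ‖gradient (fun z => Φ z t) x‖
        * Real.exp (∫ s in (0:ℝ)..t, (1 + g s)) := by
      rw [← hFt]; exact hm0.trans hb
    rw [Real.exp_neg, ← div_eq_mul_inv]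
    exact (div_le_iff₀ (hIexp t)).2 this
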